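/- arXiv:2202.00725 — 3 statements merged into one kernel-verified Lean document; each statement's English description precedes it below -/
import Mathlib

section
/- Let d ≥ 1 and let A be a measurement with n outcomes on ℂ^d. Then A is post-processing minimal (i.e., for every measurement B with any finite number of outcomes, B ⪯ A implies A ⪯ B) if and only if A is trivial, i.e., for every outcome x there exists a real number a_x ≥ 0 such that A x = (a_x : ℂ) • 1. -/
open Matrix
open scoped Kronecker ComplexOrder

noncomputable section

/-- A measurement (POVM): a finite family of positive semidefinite matrices summing to `1`. -/
def IsMeasurement {ι κ : Type*} [Fintype ι] [DecidableEq ι] [Fintype κ]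
    (A : κ → Matrix ι ι ℂ) : Prop :=
  (∀ x, (A x).PosSemidef) ∧ ∑ x, A x = 1

/-- `A` is a post-processing of `B`: `A ⪯ B`. -/
def PostProc {ι : Type*} {n m : ℕ}
    (A : Fin n → Matrix ι ι ℂ) (B : Fin m → Matrix ι ι ℂ) : Prop :=
  ∃ μ : Fin n → Fin m → ℝ,
    (∀ x y, 0 ≤ μ x y) ∧ (∀ y, ∑ x, μ x y = 1) ∧
    (∀ x, A x = ∑ y, (μ x y : ℂ) • B y)

/-- The outer product `|E⟩⟨F|` of the vectorizations of two matrices. -/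
def outerProd {ι : Type*} (E F : Matrix ι ι ℂ) : Matrix (ι × ι) (ι × ι) ℂ :=
  Matrix.of fun p q => E p.1 p.2 * star (F q.1 q.2)

/-- The (un-normalized) Fisher information map of a measurement. -/
noncomputable def Fisher {ι κ : Type*} [Fintype ι] [Fintype κ]
    (A : κ → Matrix ι ι ℂ) : Matrix (ι × ι) (ι × ι) ℂ :=
  ∑ x, (Matrix.trace (A x))⁻¹ • outerProd (A x) (A x)

/-- The generalized Fisher information map of a measurement, relative to a
positive definite state `ρ` (with positive semidefinite square root `ρ^{1/2}`). -/
noncomputable def FisherRho {ι κ : Type*} [Fintype ι] [DecidableEq ι] [Fintype κ]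
    {ρ : Matrix ι ι ℂ} (hρ : ρ.PosDef) (A : κ → Matrix ι ι ℂ) :
    Matrix (ι × ι) (ι × ι) ℂ :=
  ∑ x, (Matrix.trace (ρ * A x))⁻¹ •
    outerProd ((hρ.posSemidef.1.eigenvectorUnitary.1 *
        diagonal ((↑) ∘ (√·) ∘ hρ.posSemidef.1.eigenvalues) *
        (star hρ.posSemidef.1.eigenvectorUnitary : Matrix ι ι ℂ)) * A x)
      ((hρ.posSemidef.1.eigenvectorUnitary.1 *
        diagonal ((↑) ∘ (√·) ∘ hρ.posSemidef.1.eigenvalues) *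
        (star hρ.posSemidef.1.eigenvectorUnitary : Matrix ι ι ℂ)) * A x)

/-- The height of a finite family of self-adjoint matrices: the infimum of the traces of
Hermitian matrices dominating every member in the Loewner order. -/
noncomputable def height {ι κ : Type*} [Fintype ι] [Fintype κ]
    (X : κ → Matrix ι ι ℂ) : ℝ :=
  sInf { t : ℝ | ∃ H : Matrix ι ι ℂ, H.IsHermitian ∧
    (∀ i, (H - X i).PosSemidef) ∧ t = (Matrix.trace H).re }
/-- A measurement is post-processing minimal iff it is trivial. -/
theorem stmt0 {d n : ℕ} (hd : 1 ≤ d) (A : Fin n → Matrix (Fin d) (Fin d) ℂ)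
    (hA : IsMeasurement A) :
    (∀ (m : ℕ) (B : Fin m → Matrix (Fin d) (Fin d) ℂ),
        IsMeasurement B → PostProc B A → PostProc A B) ↔
      (∀ x, ∃ a : ℝ, 0 ≤ a ∧ A x = (a : ℂ) • 1) := by
  constructor
  · intro h x
    have hB : IsMeasurement (fun _ : Fin 1 => (1 : Matrix (Fin d) (Fin d) ℂ)) := by
      exact ⟨fun _ => Matrix.PosSemidef.one, by simp⟩
    have hBA : PostProc (fun _ : Fin 1 => (1 : Matrix (Fin d) (Fin d) ℂ)) A := by
      refine ⟨fun _ _ => 1, fun _ _ => zero_le_one, by simp, ?_⟩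
      intro y; simp [hA.2]
    obtain ⟨μ, hpos, hsum, heq⟩ := h 1 _ hB hBA
    exact ⟨μ x 0, hpos x 0, by simpa using heq x⟩
  · intro h m B hB hBA
    choose a ha hAa using h
    have hsum1 : ∑ x, a x = 1 := by
      have h1 := hA.2
      simp_rw [hAa] at h1
      have h0 : ((∑ x, a x : ℝ) : ℂ) = 1 := by
        have := congrFun (congrFun h1 ⟨0, hd⟩) ⟨0, hd⟩
        simpa [Matrix.sum_apply, Matrix.one_apply] using this
      exact_mod_cast h0
    have hm : m ≠ 0 := by
      intro hm0
      subst hm0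
      have h1 := hB.2
      simp only [Finset.univ_eq_empty, Finset.sum_empty] at h1
      have := congrFun (congrFun h1 ⟨0, hd⟩) ⟨0, hd⟩
      simp [Matrix.one_apply] at this
    refine ⟨fun x _ => a x, fun x y => ha x, fun y => hsum1, ?_⟩
    intro x
    rw [hAa, ← Finset.smul_sum, hB.2]
end
end

section
/- Let Φ : Matrix (Fin d) (Fin d) ℂ →ₗ[ℂ] Matrix (Fin D) (Fin r) ℂ be a linear map and let ρ ∈ Matrix (Fin d) (Fin d) ℂ be positive definite. For a nonzero positive semidefinite matrix E, set g(E) = (Matrix.trace (ρ * E))⁻¹ • (Φ E * (Φ E)ᴴ). Then for all nonzero positive semidefinite matrices E and F, the matrix g(E) + g(F) − g(E + F) is positive semidefinite; moreover g(c • E) = c • g(E) for every real c > 0. -/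
open Matrix
open scoped Kronecker ComplexOrder

noncomputable section

lemma psd_real_smul {n : Type*} [Fintype n] {M : Matrix n n ℂ} (hM : M.PosSemidef)
    {t : ℝ} (ht : 0 ≤ t) : ((t : ℂ) • M).PosSemidef := by
  refine Matrix.PosSemidef.of_dotProduct_mulVec_nonneg ?_ ?_
  · unfold Matrix.IsHermitian
    rw [conjTranspose_smul, hM.1]
    simp
  · intro x
    rw [Matrix.smul_mulVec, dotProduct_smul, smul_eq_mul]
    exact mul_nonneg (Complex.zero_le_real.mpr ht) (hM.dotProduct_mulVec_nonneg x)

lemma trace_pos_of_posDef_mul {n : Type*} [Fintype n] [DecidableEq n]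
    {ρ E : Matrix n n ℂ} (hρ : ρ.PosDef) (hE : E.PosSemidef) (hne : E ≠ 0) :
    0 < Matrix.trace (ρ * E) := by
  obtain ⟨B, rfl⟩ : ∃ B : Matrix n n ℂ, E = Bᴴ * B := by
    open scoped MatrixOrder Matrix.Norms.L2Operator in
    exact CStarAlgebra.nonneg_iff_eq_star_mul_self.mp hE.nonneg
  have hB : B ≠ 0 := by rintro rfl; simp at hne
  have h1 : Matrix.trace (ρ * (Bᴴ * B)) = Matrix.trace (B * ρ * Bᴴ) := by
    rw [← Matrix.mul_assoc, Matrix.trace_mul_comm, ← Matrix.mul_assoc]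
  rw [h1, Matrix.trace]
  have hdiag : ∀ i, (B * ρ * Bᴴ).diag i = star (star (B i)) ⬝ᵥ ρ *ᵥ (star (B i)) := by
    intro i
    simp only [Matrix.diag, Matrix.mul_apply, Matrix.conjTranspose_apply, dotProduct,
      Matrix.mulVec, Pi.star_apply, star_star, Finset.sum_mul, Finset.mul_sum]
    rw [Finset.sum_comm]
    congr 1; ext k; congr 1; ext j; ring
  obtain ⟨i0, j0, hij⟩ : ∃ i j, B i j ≠ 0 := by
    by_contra h; push_neg at h; exact hB (by ext i j; simpa using h i j)
  refine Finset.sum_pos' (fun i _ => ?_) ⟨i0, Finset.mem_univ _, ?_⟩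
  · rw [hdiag i]; exact hρ.posSemidef.dotProduct_mulVec_nonneg _
  · rw [hdiag i0]
    refine hρ.dotProduct_mulVec_pos (fun h => hij ?_)
    have := congrFun h j0
    simpa using this

/-- Quadratic maps satisfy the order morphism axioms. -/
theorem stmt3 {d D r : ℕ} (Φ : Matrix (Fin d) (Fin d) ℂ →ₗ[ℂ] Matrix (Fin D) (Fin r) ℂ)
    {ρ : Matrix (Fin d) (Fin d) ℂ} (hρ : ρ.PosDef)
    (g : Matrix (Fin d) (Fin d) ℂ → Matrix (Fin D) (Fin D) ℂ)
    (hg : ∀ E, g E = (Matrix.trace (ρ * E))⁻¹ • (Φ E * (Φ E)ᴴ)) :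
    (∀ E F : Matrix (Fin d) (Fin d) ℂ, E.PosSemidef → F.PosSemidef → E ≠ 0 → F ≠ 0 →
      (g E + g F - g (E + F)).PosSemidef) ∧
    (∀ (c : ℝ) (E : Matrix (Fin d) (Fin d) ℂ), E.PosSemidef → E ≠ 0 → 0 < c →
      g ((c : ℂ) • E) = (c : ℂ) • g E) := by
  have hreal : ∀ E : Matrix (Fin d) (Fin d) ℂ, E.PosSemidef → E ≠ 0 →
      ∃ t : ℝ, 0 < t ∧ Matrix.trace (ρ * E) = (t : ℂ) := by
    intro E hE hne
    have h := trace_pos_of_posDef_mul hρ hE hne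
    rw [Complex.lt_def] at h
    exact ⟨(Matrix.trace (ρ * E)).re, by simpa using h.1,
      (Complex.ext_iff.mpr ⟨by simp, by simpa using h.2.symm⟩)⟩
  constructor
  · intro E F hE hF hEne hFne
    obtain ⟨a, ha, hta⟩ := hreal E hE hEne
    obtain ⟨b, hb, htb⟩ := hreal F hF hFne
    have htab : Matrix.trace (ρ * (E + F)) = ((a + b : ℝ) : ℂ) := by
      rw [mul_add, Matrix.trace_add, hta, htb]; push_cast; ring
    set A := Φ E with hA
    set B := Φ F with hB
    have key : g E + g F - g (E + F)
        = (((a * b * (a + b))⁻¹ : ℝ) : ℂ) •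
          (((b : ℂ) • A - (a : ℂ) • B) * ((b : ℂ) • A - (a : ℂ) • B)ᴴ) := by
      rw [hg, hg, hg, hta, htb, htab, map_add]
      simp only [conjTranspose_add, conjTranspose_sub, conjTranspose_smul,
        Complex.star_def, Complex.conj_ofReal, ← hA, ← hB]
      simp only [Matrix.add_mul, Matrix.mul_add, Matrix.sub_mul, Matrix.mul_sub,
        Matrix.smul_mul, Matrix.mul_smul, smul_smul]
      have hane : (a : ℂ) ≠ 0 := Complex.ofReal_ne_zero.mpr ha.ne'
      have hbne : (b : ℂ) ≠ 0 := Complex.ofReal_ne_zero.mpr hb.ne'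
      have habne : ((a : ℂ) + b) ≠ 0 := by
        rw [← Complex.ofReal_add]
        exact Complex.ofReal_ne_zero.mpr (by positivity)
      push_cast
      match_scalars <;> field_simp <;> ring_nf <;> tauto
    rw [key]
    exact psd_real_smul (posSemidef_self_mul_conjTranspose _) (by positivity)
  · intro c E hE hne hc
    obtain ⟨a, ha, hta⟩ := hreal E hE hne
    have htc : Matrix.trace (ρ * ((c : ℂ) • E)) = ((c * a : ℝ) : ℂ) := by
      rw [Matrix.mul_smul, Matrix.trace_smul, hta, smul_eq_mul]; push_cast; ring
    rw [hg, hg, htc, hta, LinearMap.map_smul]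
    rw [conjTranspose_smul, Complex.star_def, Complex.conj_ofReal]
    rw [Matrix.smul_mul, Matrix.mul_smul, smul_smul, smul_smul, smul_smul]
    congr 1
    have hane : (a : ℂ) ≠ 0 := Complex.ofReal_ne_zero.mpr ha.ne'
    have hcne : (c : ℂ) ≠ 0 := Complex.ofReal_ne_zero.mpr hc.ne'
    push_cast
    field_simp
end
end

section
/- Let Φ : Matrix (Fin d) (Fin d) ℂ →ₗ[ℂ] Matrix (Fin D) (Fin r) ℂ be a linear map, and for a measurement A with n outcomes on ℂ^d all of whose effects are nonzero, define G(A) = ∑ x, (Matrix.trace (A x))⁻¹ • (Φ (A x) * (Φ (A x))ᴴ). Then the Fisher information map is at least as informative as G: for all measurements A and B (with all effects nonzero), if F(B) − F(A) is positive semidefinite, then G(B) − G(A) is positive semidefinite. -/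
open Matrix
open scoped Kronecker ComplexOrder

noncomputable section

section Aux

variable {d D r : ℕ}

private lemma outer_quad (E : Matrix (Fin d) (Fin d) ℂ) (u : Fin d × Fin d → ℂ) :
    star u ⬝ᵥ (outerProd E E) *ᵥ u
      = (∑ p, star (u p) * E p.1 p.2) * star (∑ p, star (u p) * E p.1 p.2) := by
  rw [star_sum, Finset.sum_mul_sum]
  simp only [dotProduct, mulVec, outerProd, of_apply, Pi.star_apply, star_mul', star_star,
    Finset.mul_sum]
  refine Finset.sum_congr rfl fun p _ => Finset.sum_congr rfl fun q _ => by ring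

private lemma mul_quad (M : Matrix (Fin D) (Fin r) ℂ) (v : Fin D → ℂ) :
    star v ⬝ᵥ (M * Mᴴ) *ᵥ v
      = ∑ b, (∑ a, star (v a) * M a b) * star (∑ a, star (v a) * M a b) := by
  simp only [dotProduct, mulVec, mul_apply, conjTranspose_apply, Pi.star_apply, star_sum,
    star_mul', star_star, Finset.mul_sum, Finset.sum_mul]
  conv_rhs => enter [2, b]; rw [Finset.sum_comm]
  conv_rhs => rw [Finset.sum_comm]
  refine Finset.sum_congr rfl fun a _ => ?_
  rw [Finset.sum_comm]
  refine Finset.sum_congr rfl fun c _ => Finset.sum_congr rfl fun b _ => by ring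

private noncomputable def wvec (Φ : Matrix (Fin d) (Fin d) ℂ →ₗ[ℂ] Matrix (Fin D) (Fin r) ℂ)
    (v : Fin D → ℂ) (b : Fin r) : Fin d × Fin d → ℂ :=
  fun p => ∑ a, star (Φ (Matrix.single p.1 p.2 1) a b) * v a

private lemma wvec_inner (Φ : Matrix (Fin d) (Fin d) ℂ →ₗ[ℂ] Matrix (Fin D) (Fin r) ℂ)
    (v : Fin D → ℂ) (b : Fin r) (E : Matrix (Fin d) (Fin d) ℂ) :
    ∑ p : Fin d × Fin d, star (wvec Φ v b p) * E p.1 p.2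
      = ∑ a, star (v a) * Φ E a b := by
  have hE : Φ E = ∑ p : Fin d × Fin d, E p.1 p.2 • Φ (Matrix.single p.1 p.2 1) := by
    rw [Fintype.sum_prod_type]
    conv_lhs => rw [matrix_eq_sum_single E]
    rw [map_sum]
    refine Finset.sum_congr rfl fun i _ => ?_
    rw [map_sum]
    refine Finset.sum_congr rfl fun j _ => ?_
    rw [← _root_.map_smul, Matrix.smul_single, smul_eq_mul, mul_one]
  simp only [hE, wvec, star_sum, star_mul', star_star, Matrix.sum_apply, Pi.smul_apply,
    smul_eq_mul, Matrix.smul_apply, Finset.mul_sum, Finset.sum_mul]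
  rw [Finset.sum_comm]
  refine Finset.sum_congr rfl fun p _ => Finset.sum_congr rfl fun a _ => by ring

private lemma quad_key (Φ : Matrix (Fin d) (Fin d) ℂ →ₗ[ℂ] Matrix (Fin D) (Fin r) ℂ)
    (E : Matrix (Fin d) (Fin d) ℂ) (v : Fin D → ℂ) :
    star v ⬝ᵥ (Φ E * (Φ E)ᴴ) *ᵥ v
      = ∑ b, star (wvec Φ v b) ⬝ᵥ (outerProd E E) *ᵥ (wvec Φ v b) := by
  rw [mul_quad]
  refine Finset.sum_congr rfl fun b _ => ?_
  rw [outer_quad, wvec_inner]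

private lemma sum_mulVec' {k : ℕ} {α β : Type*} [Fintype α] [Fintype β]
    (M : Fin k → Matrix α β ℂ) (u : β → ℂ) :
    (∑ x, M x) *ᵥ u = ∑ x, M x *ᵥ u := by
  ext i
  simp only [mulVec, dotProduct, Matrix.sum_apply, Finset.sum_apply, Finset.sum_mul]
  rw [Finset.sum_comm]

private lemma dotProduct_sum' {k : ℕ} {α : Type*} [Fintype α]
    (u : α → ℂ) (f : Fin k → α → ℂ) :
    u ⬝ᵥ (∑ x, f x) = ∑ x, u ⬝ᵥ f x := by
  simp only [dotProduct, Finset.sum_apply, Finset.mul_sum]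
  rw [Finset.sum_comm]

end Aux

/-- The Fisher information map is at least as informative as any quadratic map. -/
theorem stmt4 {d D r n m : ℕ}
    (Φ : Matrix (Fin d) (Fin d) ℂ →ₗ[ℂ] Matrix (Fin D) (Fin r) ℂ)
    (A : Fin n → Matrix (Fin d) (Fin d) ℂ) (B : Fin m → Matrix (Fin d) (Fin d) ℂ)
    (hA : IsMeasurement A) (hB : IsMeasurement B)
    (hA0 : ∀ x, A x ≠ 0) (hB0 : ∀ y, B y ≠ 0)
    (h : (Fisher B - Fisher A).PosSemidef) :
    ((∑ y, (Matrix.trace (B y))⁻¹ • (Φ (B y) * (Φ (B y))ᴴ)) -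
      (∑ x, (Matrix.trace (A x))⁻¹ • (Φ (A x) * (Φ (A x))ᴴ))).PosSemidef := by
  refine posSemidef_iff_dotProduct_mulVec.mpr ⟨?_, ?_⟩
  · have hstA : ∀ x, star ((Matrix.trace (A x))⁻¹) = (Matrix.trace (A x))⁻¹ := fun x => by
      rw [star_inv₀, ← Matrix.trace_conjTranspose, (hA.1 x).1]
    have hstB : ∀ y, star ((Matrix.trace (B y))⁻¹) = (Matrix.trace (B y))⁻¹ := fun y => by
      rw [star_inv₀, ← Matrix.trace_conjTranspose, (hB.1 y).1]
    show _ᴴ = _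
    simp only [conjTranspose_sub, conjTranspose_sum, conjTranspose_smul, conjTranspose_mul,
      conjTranspose_conjTranspose, hstA, hstB]
  · intro v
    have expand : ∀ {k : ℕ} (C : Fin k → Matrix (Fin d) (Fin d) ℂ),
        star v ⬝ᵥ (∑ x, (Matrix.trace (C x))⁻¹ • (Φ (C x) * (Φ (C x))ᴴ)) *ᵥ v
          = ∑ b, star (wvec Φ v b) ⬝ᵥ
              (∑ x, (Matrix.trace (C x))⁻¹ • outerProd (C x) (C x)) *ᵥ (wvec Φ v b) := by
      intro k C
      rw [sum_mulVec', dotProduct_sum']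
      conv_rhs => enter [2, b]; rw [sum_mulVec', dotProduct_sum']
      rw [Finset.sum_comm]
      refine Finset.sum_congr rfl fun x _ => ?_
      simp only [smul_mulVec, dotProduct_smul, smul_eq_mul]
      rw [quad_key, Finset.mul_sum]
    rw [sub_mulVec, dotProduct_sub, expand, expand, ← Finset.sum_sub_distrib]
    refine Finset.sum_nonneg fun b _ => ?_
    have hb := h.dotProduct_mulVec_nonneg (wvec Φ v b)
    rwa [Fisher, Fisher, sub_mulVec, dotProduct_sub] at hb
end
end
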